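/- arXiv:1602.04507 — 2 statements merged into one kernel-verified Lean document; each statement's English description precedes it below -/
import Mathlib

section
/- Let D be a superdialgebra over R. Define, for homogeneous a, b ∈ D, the bracket [a,b] := a ⊣ b − (−1)^{|a||b|} b ⊢ a, extended R-bilinearly. Then this bracket respects the grading ([Dα, Dβ] ⊆ D_{α+β}) and satisfies the graded Leibniz identity [x,[y,z]] = [[x,y],z] − (−1)^{|y||z|} [[x,z],y] for all homogeneous x, y, z ∈ D; that is, D with this bracket is a Leibniz superalgebra. -/
/-- The sign `(−1)^{αβ}` for degrees `α β : ℤ/2`, as an integer. -/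
def ssign (α β : ZMod 2) : ℤ := (-1 : ℤ) ^ (α * β).val

/-- An associative superdialgebra over a commutative unital ring `R`:
an `R`-module `D` with a `ℤ/2`-grading `D = D₀ ⊕ D₁` (internal direct sum) and two
`R`-bilinear associative operations `⊣` (here `ld`) and `⊢` (here `rd`) compatible with the
grading and satisfying the three dialgebra axioms. -/
structure Superdialgebra (R : Type*) (D : Type*) [CommRing R] [AddCommGroup D]
    [Module R D] where
  grade : ZMod 2 → Submodule R D
  isInternal : DirectSum.IsInternal grade
  ld : D →ₗ[R] D →ₗ[R] D
  rd : D →ₗ[R] D →ₗ[R] D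
  ld_assoc : ∀ a b c : D, ld (ld a b) c = ld a (ld b c)
  rd_assoc : ∀ a b c : D, rd (rd a b) c = rd a (rd b c)
  ld_mem : ∀ (α β : ZMod 2) (a b : D), a ∈ grade α → b ∈ grade β → ld a b ∈ grade (α + β)
  rd_mem : ∀ (α β : ZMod 2) (a b : D), a ∈ grade α → b ∈ grade β → rd a b ∈ grade (α + β)
  di1 : ∀ a b c : D, ld a (ld b c) = ld a (rd b c)
  di2 : ∀ a b c : D, ld (rd a b) c = rd a (ld b c)
  di3 : ∀ a b c : D, rd (ld a b) c = rd (rd a b) c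

/-- The bracket `[a,b] = a ⊣ b − (−1)^{αβ} b ⊢ a` of elements `a, b` of degrees `α, β`. -/
def sbracket {R D : Type*} [CommRing R] [AddCommGroup D] [Module R D]
    (S : Superdialgebra R D) (α β : ZMod 2) (a b : D) : D :=
  S.ld a b - ssign α β • S.rd b a

/-- A Leibniz superalgebra over a commutative unital ring `R`: an `R`-module with a
`ℤ/2`-grading (internal direct sum) and an `R`-bilinear bracket respecting the grading and
satisfying the graded Leibniz identity on homogeneous elements. -/
structure LeibnizSuperalgebra (R : Type*) (L : Type*) [CommRing R] [AddCommGroup L]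
    [Module R L] where
  grade : ZMod 2 → Submodule R L
  isInternal : DirectSum.IsInternal grade
  bracket : L →ₗ[R] L →ₗ[R] L
  bracket_mem : ∀ (α β : ZMod 2) (x y : L), x ∈ grade α → y ∈ grade β →
    bracket x y ∈ grade (α + β)
  leibniz : ∀ (α β γ : ZMod 2) (x y z : L), x ∈ grade α → y ∈ grade β → z ∈ grade γ →
    bracket x (bracket y z) =
      bracket (bracket x y) z - ssign β γ • bracket (bracket x z) y

section Aux

variable {R D : Type*} [CommRing R] [AddCommGroup D] [Module R D]

/-- The bracket respects the grading. -/
lemma sbracket_mem (S : Superdialgebra R D) (α β : ZMod 2) (a b : D)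
    (ha : a ∈ S.grade α) (hb : b ∈ S.grade β) : sbracket S α β a b ∈ S.grade (α + β) :=
  (S.grade _).sub_mem (S.ld_mem _ _ _ _ ha hb)
    (zsmul_mem (by simpa [add_comm] using S.rd_mem β α b a hb ha) _)

/-- The graded Leibniz identity (holds for all elements, degrees given abstractly). -/
lemma sbracket_leibniz (S : Superdialgebra R D) (α β γ : ZMod 2) (x y z : D) :
    sbracket S α (β + γ) x (sbracket S β γ y z) =
      sbracket S (α + β) γ (sbracket S α β x y) z -
        ssign β γ • sbracket S (α + γ) β (sbracket S α γ x z) y := by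
  simp only [sbracket, map_sub, map_smul, LinearMap.sub_apply, LinearMap.smul_apply,
    smul_sub, smul_smul, map_zsmul]
  rw [S.ld_assoc x y z, S.ld_assoc x z y, ← S.di1 x z y, S.di2 y x z, S.di2 z x y,
    ← S.rd_assoc z y x, ← S.rd_assoc y z x, ← S.di3 y z x]
  have h1 : ∀ α β γ : ZMod 2, ssign α (β + γ) = ssign α β * ssign α γ := by decide
  have h2 : ∀ α β γ : ZMod 2, ssign (α + β) γ = ssign α γ * ssign β γ := by decide
  have h3 : ∀ α β γ : ZMod 2, ssign (α + γ) β = ssign α β * ssign β γ := by decide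
  have hs : ssign β γ = 1 ∨ ssign β γ = -1 := by revert β γ; decide
  rw [h1, h2, h3]
  rcases hs with h | h <;> rw [h] <;> module

/-- Projection onto the degree-`α` component. -/
noncomputable def sproj (S : Superdialgebra R D) (α : ZMod 2) : D →ₗ[R] D :=
  (S.grade α).subtype ∘ₗ
    (DirectSum.component R (ZMod 2) (fun i => (S.grade i : Submodule R D)) α) ∘ₗ
    (LinearEquiv.ofBijective (DirectSum.coeLinearMap S.grade) S.isInternal).symm.toLinearMap

lemma sproj_of_mem (S : Superdialgebra R D) {α β : ZMod 2} {a : D} (ha : a ∈ S.grade β) :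
    sproj S α a = if α = β then a else 0 := by
  simp only [sproj, LinearMap.comp_apply, LinearEquiv.coe_coe]
  rcases eq_or_ne α β with h | h
  · subst h
    simp only [DirectSum.component, DFinsupp.lapply_apply, if_pos rfl]
    erw [S.isInternal.ofBijective_coeLinearMap_of_mem ha]
    simp
  · simp only [DirectSum.component, DFinsupp.lapply_apply, if_neg h]
    erw [S.isInternal.ofBijective_coeLinearMap_of_mem_ne h.symm ha]
    rfl

/-- The `R`-bilinear extension of the bracket. -/
noncomputable def sbr (S : Superdialgebra R D) : D →ₗ[R] D →ₗ[R] D :=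
  S.ld - ∑ α : ZMod 2, ∑ β : ZMod 2,
    ssign α β • ((S.rd.flip ∘ₗ sproj S α).compl₂ (sproj S β))

lemma sbr_eq (S : Superdialgebra R D) (α β : ZMod 2) (a b : D)
    (ha : a ∈ S.grade α) (hb : b ∈ S.grade β) :
    sbr S a b = sbracket S α β a b := by
  simp only [sbr, sbracket, LinearMap.sub_apply, LinearMap.sum_apply, LinearMap.smul_apply,
    LinearMap.compl₂_apply, LinearMap.comp_apply, LinearMap.flip_apply]
  congr 1
  rw [Finset.sum_eq_single α]
  · rw [Finset.sum_eq_single β]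
    · rw [sproj_of_mem S ha, sproj_of_mem S hb, if_pos rfl, if_pos rfl]
    · intro c _ hc
      rw [sproj_of_mem S hb, if_neg hc]
      simp
    · simp
  · intro c _ hc
    rw [sproj_of_mem S ha, if_neg hc]
    simp
  · simp

end Aux

/-- for a superdialgebra `D`, the bracket `[a,b] = a ⊣ b − (−1)^{|a||b|} b ⊢ a`
respects the grading, satisfies the graded Leibniz identity on homogeneous elements, and
(extended `R`-bilinearly) turns `D` into a Leibniz superalgebra. -/
theorem superdialgebra_bracket_leibnizSuperalgebra
    {R D : Type*} [CommRing R] [AddCommGroup D] [Module R D] (S : Superdialgebra R D) :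
    (∀ (α β : ZMod 2) (a b : D), a ∈ S.grade α → b ∈ S.grade β →
      sbracket S α β a b ∈ S.grade (α + β)) ∧
    (∀ (α β γ : ZMod 2) (x y z : D), x ∈ S.grade α → y ∈ S.grade β → z ∈ S.grade γ →
      sbracket S α (β + γ) x (sbracket S β γ y z) =
        sbracket S (α + β) γ (sbracket S α β x y) z -
          ssign β γ • sbracket S (α + γ) β (sbracket S α γ x z) y) ∧
    (∃ SL : LeibnizSuperalgebra R D, SL.grade = S.grade ∧
      ∀ (α β : ZMod 2) (a b : D), a ∈ S.grade α → b ∈ S.grade β →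
        SL.bracket a b = sbracket S α β a b) := by
  refine ⟨fun α β a b ha hb => sbracket_mem S α β a b ha hb,
    fun α β γ x y z _ _ _ => sbracket_leibniz S α β γ x y z, ?_⟩
  refine ⟨⟨S.grade, S.isInternal, sbr S, ?_, ?_⟩, rfl,
    fun α β a b ha hb => sbr_eq S α β a b ha hb⟩
  · intro α β x y hx hy
    rw [sbr_eq S α β x y hx hy]
    exact sbracket_mem S α β x y hx hy
  · intro α β γ x y z hx hy hz
    rw [sbr_eq S β γ y z hy hz, sbr_eq S α β x y hx hy, sbr_eq S α γ x z hx hz,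
      sbr_eq S α (β + γ) x _ hx (sbracket_mem S β γ y z hy hz),
      sbr_eq S (α + β) γ _ z (sbracket_mem S α β x y hx hy) hz,
      sbr_eq S (α + γ) β _ y (sbracket_mem S α γ x z hx hz) hy]
    exact sbracket_leibniz S α β γ x y z
end

section
/- Let A be an associative R-algebra and d : A → A an R-linear map satisfying d(ab) = d(a)b + a d(b) for all a, b ∈ A and d ∘ d = 0. Then the two R-bilinear operations x ⊣ y := x · d(y) and x ⊢ y := d(x) · y are both associative and satisfy the three dialgebra axioms: a ⊣ (b ⊣ c) = a ⊣ (b ⊢ c), (a ⊢ b) ⊣ c = a ⊢ (b ⊣ c), and (a ⊣ b) ⊢ c = (a ⊢ b) ⊢ c for all a, b, c ∈ A; that is, (A, ⊣, ⊢) is a dialgebra over R. -/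
/-- An associative dialgebra over a commutative unital ring `R`: an `R`-module with two
`R`-bilinear associative operations `⊣` (here `ld`) and `⊢` (here `rd`) satisfying the three
dialgebra axioms. -/
structure Dialgebra (R : Type*) (D : Type*) [CommRing R] [AddCommGroup D] [Module R D] where
  ld : D →ₗ[R] D →ₗ[R] D
  rd : D →ₗ[R] D →ₗ[R] D
  ld_assoc : ∀ a b c : D, ld (ld a b) c = ld a (ld b c)
  rd_assoc : ∀ a b c : D, rd (rd a b) c = rd a (rd b c)
  di1 : ∀ a b c : D, ld a (ld b c) = ld a (rd b c)
  di2 : ∀ a b c : D, ld (rd a b) c = rd a (ld b c)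
  di3 : ∀ a b c : D, rd (ld a b) c = rd (rd a b) c

/-- a differential associative `R`-algebra `(A, d)` becomes a dialgebra with
`x ⊣ y = x·d(y)` and `x ⊢ y = d(x)·y`: both operations are associative and the three
dialgebra axioms hold. -/
theorem differential_algebra_dialgebra
    {R A : Type*} [CommRing R] [Ring A] [Algebra R A] (d : A →ₗ[R] A)
    (hder : ∀ a b : A, d (a * b) = d a * b + a * d b)
    (hd2 : ∀ a : A, d (d a) = 0) :
    (∀ a b c : A, (a * d b) * d c = a * d (b * d c)) ∧
    (∀ a b c : A, d (d a * b) * c = d a * (d b * c)) ∧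
    (∀ a b c : A, a * d (b * d c) = a * d (d b * c)) ∧
    (∀ a b c : A, (d a * b) * d c = d a * (b * d c)) ∧
    (∀ a b c : A, d (a * d b) * c = d (d a * b) * c) ∧
    (∃ T : Dialgebra R A,
      (∀ x y : A, T.ld x y = x * d y) ∧ (∀ x y : A, T.rd x y = d x * y)) := by
  have key1 : ∀ a b : A, d (a * d b) = d a * d b := by
    intro a b; rw [hder, hd2, mul_zero, add_zero]
  have key2 : ∀ a b : A, d (d a * b) = d a * d b := by
    intro a b; rw [hder, hd2, zero_mul, zero_add]
  have h1 : ∀ a b c : A, (a * d b) * d c = a * d (b * d c) := by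
    intro a b c; rw [key1, mul_assoc]
  have h2 : ∀ a b c : A, d (d a * b) * c = d a * (d b * c) := by
    intro a b c; rw [key2, mul_assoc]
  have h3 : ∀ a b c : A, a * d (b * d c) = a * d (d b * c) := by
    intro a b c; rw [key1, key2]
  have h4 : ∀ a b c : A, (d a * b) * d c = d a * (b * d c) := fun a b c => mul_assoc _ _ _
  have h5 : ∀ a b c : A, d (a * d b) * c = d (d a * b) * c := by
    intro a b c; rw [key1, key2]
  refine ⟨h1, h2, h3, h4, h5, ?_⟩
  refine ⟨{
    ld := LinearMap.mk₂ R (fun x y => x * d y)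
      (fun x x' y => by simp [add_mul, mul_add, add_mul, smul_mul_assoc, mul_smul_comm])
      (fun r x y => by simp [smul_mul_assoc])
      (fun x y y' => by simp [map_add, mul_add, mul_add, add_mul, smul_mul_assoc, mul_smul_comm])
      (fun r x y => by simp [map_smul, mul_smul_comm])
    rd := LinearMap.mk₂ R (fun x y => d x * y)
      (fun x x' y => by simp [map_add, add_mul, mul_add, add_mul, smul_mul_assoc, mul_smul_comm])
      (fun r x y => by simp [map_smul, smul_mul_assoc])
      (fun x y y' => by simp [mul_add, mul_add, add_mul, smul_mul_assoc, mul_smul_comm])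
      (fun r x y => by simp [mul_smul_comm])
    ld_assoc := fun a b c => h1 a b c
    rd_assoc := fun a b c => h2 a b c
    di1 := fun a b c => h3 a b c
    di2 := fun a b c => h4 a b c
    di3 := fun a b c => h5 a b c
  }, fun x y => rfl, fun x y => rfl⟩
end
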